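/- Let n1, n2, n3, n4, m be nonnegative integers with n1 > n2, n3 ≥ n4, and m ≤ n1; let q = max(n1, n2, n3, n4, m) and let Q be the q×q shift matrix over 𝔽₂. Then there exist q×q matrices G_A, G_B over 𝔽₂ such that, with G_S = Q^{q−n3} G_A Q^{q−n1} + Q^{q−n4} G_B Q^{q−n2} and G_M = Q^{q−n3} G_A Q^{q−m} + Q^{q−n4} G_B Q^{q−m}, one has G_M = 0 and rank(G_S) − dim(range(G_S) ∩ range(G_M)) = min(n1 − m + min(m, n4), n3). -/

import Mathlib

/-- The `q × q` lower shift matrix over `𝔽₂`: entry `(i, j)` is `1` iff `i = j + 1`. -/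
def shiftQ (q : ℕ) : Matrix (Fin q) (Fin q) (ZMod 2) :=
  Matrix.of fun i j => if (i : ℕ) = (j : ℕ) + 1 then 1 else 0

namespace RateAux
open Matrix

lemma shiftQ_pow_apply (q k : ℕ) (i j : Fin q) :
    (shiftQ q ^ k) i j = if (i : ℕ) = (j : ℕ) + k then 1 else 0 := by
  induction k generalizing i j with
  | zero => simp [Matrix.one_apply, Fin.ext_iff]
  | succ k ih =>
    rw [pow_succ', Matrix.mul_apply]
    rcases Nat.eq_zero_or_eq_succ_pred i.val with h0 | h1
    · rw [Finset.sum_eq_zero, if_neg (by omega)]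
      intro l _
      simp [shiftQ, h0]
    · have hlt : i.val - 1 < q := by omega
      rw [Finset.sum_eq_single ⟨i.val - 1, hlt⟩]
      · rw [ih]
        simp only [shiftQ, Matrix.of_apply]
        rw [if_pos (show (i:ℕ) = (⟨i.val-1,hlt⟩ : Fin q).val + 1 by simp; omega), one_mul]
        by_cases h : (i : ℕ) = (j : ℕ) + (k+1)
        · rw [if_pos (by omega), if_pos h]
        · rw [if_neg (by omega), if_neg h]
      · intro l _ hl
        rw [ih]
        simp only [shiftQ, Matrix.of_apply]
        rw [if_neg, zero_mul]
        intro hc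
        exact hl (by apply Fin.ext; simp; omega)
      · simp

lemma shiftQ_pow_mul_apply (q k : ℕ) (M : Matrix (Fin q) (Fin q) (ZMod 2)) (i j : Fin q) :
    (shiftQ q ^ k * M) i j =
      if h : k ≤ (i : ℕ) then M ⟨(i : ℕ) - k, by omega⟩ j else 0 := by
  rw [Matrix.mul_apply]
  by_cases h : k ≤ (i : ℕ)
  · rw [dif_pos h, Finset.sum_eq_single (⟨(i:ℕ) - k, by omega⟩ : Fin q)]
    · rw [shiftQ_pow_apply, if_pos (by simp; omega), one_mul]
    · intro l _ hl
      rw [shiftQ_pow_apply, if_neg, zero_mul]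
      intro hc; exact hl (by apply Fin.ext; simp; omega)
    · simp
  · rw [dif_neg h, Finset.sum_eq_zero]
    intro l _
    rw [shiftQ_pow_apply, if_neg (by omega), zero_mul]

lemma mul_shiftQ_pow_apply (q k : ℕ) (M : Matrix (Fin q) (Fin q) (ZMod 2)) (i j : Fin q) :
    (M * shiftQ q ^ k) i j =
      if h : (j : ℕ) + k < q then M i ⟨(j : ℕ) + k, h⟩ else 0 := by
  rw [Matrix.mul_apply]
  by_cases h : (j : ℕ) + k < q
  · rw [dif_pos h, Finset.sum_eq_single (⟨(j:ℕ) + k, h⟩ : Fin q)]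
    · rw [shiftQ_pow_apply, if_pos (by simp), mul_one]
    · intro l _ hl
      rw [shiftQ_pow_apply, if_neg, mul_zero]
      intro hc; exact hl (by apply Fin.ext; simp; omega)
    · simp
  · rw [dif_neg h, Finset.sum_eq_zero]
    intro l _
    rw [shiftQ_pow_apply, if_neg (by omega), mul_zero]

def cfun (q u d l i : ℕ) : ZMod 2 :=
  if l ≤ q - 1 - i ∧ q - 1 - i < u ∧ d ∣ (q - 1 - i - l) then 1 else 0

def tg (q n3 s' j i : ℕ) : ZMod 2 :=
  if j < s' ∧ i = q - n3 + j then 1 else 0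

lemma cfun_zero_of_le {q u d l i : ℕ} (h : u ≤ l) : cfun q u d l i = 0 := by
  unfold cfun; rw [if_neg]; omega

lemma cfun_zero_of_row {q u d l i : ℕ} (hi : i < q) (h : i < q - u) :
    cfun q u d l i = 0 := by
  unfold cfun; rw [if_neg]; omega

lemma tg_zero_of_row {q n3 s' j i : ℕ} (h : i < q - n3) :
    tg q n3 s' j i = 0 := by
  unfold tg; rw [if_neg]; omega

lemma cfun_key2 {q u d k i : ℕ} (hi : i < q) (huq : u ≤ q) (hkd : u ≤ k + d) :
    cfun q u d k i = if k < u ∧ i = q - 1 - k then 1 else 0 := by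
  unfold cfun
  by_cases hW : k < u ∧ i = q - 1 - k
  · rw [if_pos ⟨by omega, by omega, by rw [show q - 1 - i - k = 0 by omega]; exact dvd_zero d⟩]
    rw [if_pos hW]
  · rw [if_neg, if_neg hW]
    rintro ⟨h1, h2, h3⟩
    set L := q - 1 - i with hL
    have h4 : L - k < d ∨ L = k := by omega
    rcases h4 with h4 | h4
    · have h5 : L - k = 0 := by
        rcases Nat.eq_zero_or_pos (L - k) with h | h
        · exact h
        · exact absurd (Nat.le_of_dvd h h3) (by omega)
      exact hW ⟨by omega, by omega⟩
    · exact hW ⟨by omega, by omega⟩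

lemma cfun_key1 {q u d k i : ℕ} (hi : i < q) (huq : u ≤ q) (hd : 1 ≤ d) :
    cfun q u d k i + cfun q u d (k + d) i
      = if k < u ∧ i = q - 1 - k then 1 else 0 := by
  unfold cfun
  set L := q - 1 - i with hL
  by_cases hW : k < u ∧ i = q - 1 - k
  · have hLk : L = k := by omega
    rw [if_pos ⟨by omega, by omega, by rw [show L - k = 0 by omega]; exact dvd_zero d⟩]
    rw [if_neg (by omega), if_pos hW, add_zero]
  · rw [if_neg hW]
    by_cases hA : k ≤ L ∧ L < u ∧ d ∣ L - k
    · have hne : L ≠ k := by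
        intro h; exact hW ⟨by omega, by omega⟩
      have hge : d ≤ L - k := Nat.le_of_dvd (by omega) hA.2.2
      have hB : k + d ≤ L ∧ L < u ∧ d ∣ L - (k + d) := by
        refine ⟨by omega, hA.2.1, ?_⟩
        have : L - (k + d) = (L - k) - d := by omega
        rw [this]
        exact Nat.dvd_sub hA.2.2 (dvd_refl d)
      rw [if_pos hA, if_pos hB]
      exact CharTwo.add_self_eq_zero 1
    · by_cases hB : k + d ≤ L ∧ L < u ∧ d ∣ L - (k + d)
      · exfalso
        apply hA
        refine ⟨by omega, hB.2.1, ?_⟩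
        have : L - k = (L - (k + d)) + d := by omega
        rw [this]
        exact dvd_add hB.2.2 (dvd_refl d)
      · rw [if_neg hA, if_neg hB, add_zero]

def Anat (q n1 n2 n3 m s' u d : ℕ) (i j : ℕ) : ZMod 2 :=
  if q - n1 ≤ j ∧ j < q - m then
    tg q n3 s' (j - (q - n1)) i +
      (if n2 ≤ (j - (q - n1)) + m then cfun q u d ((j - (q - n1)) + m - n2) i else 0)
  else if q - m ≤ j then cfun q u d (j - (q - m)) i else 0

def Bnat (q m u d : ℕ) (i j : ℕ) : ZMod 2 :=
  if q - m ≤ j then cfun q u d (j - (q - m)) i else 0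

lemma Anat_row_zero {q n1 n2 n3 m s' u d i : ℕ} (j : ℕ)
    (hu : u ≤ n3) (h : i < q - n3) :
    Anat q n1 n2 n3 m s' u d i j = 0 := by
  have hiq : i < q := by omega
  unfold Anat
  split
  · rw [tg_zero_of_row h, zero_add]
    split
    · exact cfun_zero_of_row hiq (by omega)
    · rfl
  · split
    · exact cfun_zero_of_row hiq (by omega)
    · rfl

lemma Bnat_row_zero {q n4 m u d i : ℕ} (j : ℕ)
    (hu : u ≤ n4) (h : i < q - n4) :
    Bnat q m u d i j = 0 := by
  have hiq : i < q := by omega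
  unfold Bnat
  split
  · exact cfun_zero_of_row hiq (by omega)
  · rfl

def Emat (q n3 s s' u : ℕ) : Matrix (Fin q) (Fin q) (ZMod 2) :=
  Matrix.of fun i j =>
    if (j : ℕ) < s' ∧ (i : ℕ) = q - n3 + (j : ℕ) then 1
    else if s ≤ (j : ℕ) ∧ (j : ℕ) < s + u ∧ (i : ℕ) = q - 1 - ((j : ℕ) - s) then 1
    else 0

lemma Emat_rank (q n3 s s' u : ℕ)
    (hs' : s' ≤ s) (hn3 : n3 ≤ q) (hsu : s' + u ≤ n3) (hsq : s + u ≤ q)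
    (hu0 : u ≠ 0 → s' = s) :
    (Emat q n3 s s' u).rank = s' + u := by
  classical
  set ρ : Fin (s' + u) → Fin q := fun k =>
    if (k : ℕ) < s' then ⟨q - n3 + k, by omega⟩
    else ⟨q - 1 - ((k : ℕ) - s'), by omega⟩ with hρ
  have hρval : ∀ k : Fin (s' + u),
      (ρ k : ℕ) = if (k : ℕ) < s' then q - n3 + (k : ℕ) else q - 1 - ((k : ℕ) - s') := by
    intro k; simp only [hρ]; split <;> simp
  have hρinj : Function.Injective ρ := by
    intro a b hab
    have h1 := hρval a
    have h2 := hρval b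
    rw [hab] at h1
    apply Fin.ext
    split at h1 <;> split at h2 <;> omega
  set v : Fin (s' + u) → (Fin q → ZMod 2) := fun k => Pi.single (ρ k) 1 with hv
  have hvapp : ∀ (k : Fin (s' + u)) (i : Fin q),
      v k i = if (i : ℕ) = (if (k : ℕ) < s' then q - n3 + (k : ℕ) else q - 1 - ((k : ℕ) - s'))
        then 1 else 0 := by
    intro k i
    rw [← hρval k]
    simp only [hv, Pi.single_apply, Fin.val_eq_val]
  have hvli : LinearIndependent (ZMod 2) v := by
    have hb := (Pi.basisFun (ZMod 2) (Fin q)).linearIndependent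
    have : v = (⇑(Pi.basisFun (ZMod 2) (Fin q))) ∘ ρ := by
      funext k
      simp [hv, Pi.basisFun_apply]
    rw [this]
    exact hb.comp ρ hρinj
  have hEapp : ∀ i j : Fin q, (Emat q n3 s s' u)ᵀ j i =
      (if (j : ℕ) < s' ∧ (i : ℕ) = q - n3 + (j : ℕ) then 1
      else if s ≤ (j : ℕ) ∧ (j : ℕ) < s + u ∧ (i : ℕ) = q - 1 - ((j : ℕ) - s) then 1
      else 0) := fun i j => rfl
  have hcol : ∀ j : Fin q, (Emat q n3 s s' u)ᵀ j = 0 ∨ ∃ k, (Emat q n3 s s' u)ᵀ j = v k := by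
    intro j
    by_cases h1 : (j : ℕ) < s'
    · right
      refine ⟨⟨(j : ℕ), by omega⟩, ?_⟩
      funext i
      rw [hEapp, hvapp]
      simp only [Fin.val_mk]
      split_ifs <;> first | rfl | omega
    · by_cases h2 : s ≤ (j : ℕ) ∧ (j : ℕ) < s + u
      · right
        have hs'eq : s' = s := hu0 (by omega)
        refine ⟨⟨s' + ((j : ℕ) - s), by omega⟩, ?_⟩
        funext i
        rw [hEapp, hvapp]
        simp only [Fin.val_mk]
        split_ifs <;> first | rfl | omega
      · left
        funext i
        rw [hEapp]
        simp only [Pi.zero_apply]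
        split_ifs <;> first | rfl | omega
  have hspan : Submodule.span (ZMod 2) (Set.range (Emat q n3 s s' u)ᵀ)
      = Submodule.span (ZMod 2) (Set.range v) := by
    apply le_antisymm
    · rw [Submodule.span_le]
      rintro x ⟨j, rfl⟩
      rcases hcol j with h | ⟨k, h⟩
      · rw [h]; exact Submodule.zero_mem _
      · rw [h]; exact Submodule.subset_span ⟨k, rfl⟩
    · rw [Submodule.span_le]
      rintro x ⟨k, rfl⟩
      by_cases h1 : (k : ℕ) < s'
      · have : v k = (Emat q n3 s s' u)ᵀ ⟨(k : ℕ), by omega⟩ := by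
          funext i
          rw [hEapp, hvapp]
          simp only [Fin.val_mk]
          split_ifs <;> first | rfl | omega
        rw [this]; exact Submodule.subset_span ⟨_, rfl⟩
      · have hs'eq : s' = s := hu0 (by omega)
        have hk : (k : ℕ) < s' + u := k.isLt
        have : v k = (Emat q n3 s s' u)ᵀ ⟨s + ((k : ℕ) - s'), by omega⟩ := by
          funext i
          rw [hEapp, hvapp]
          simp only [Fin.val_mk]
          split_ifs <;> first | rfl | omega
        rw [this]; exact Submodule.subset_span ⟨_, rfl⟩
  rw [Matrix.rank, Matrix.range_mulVecLin,
    show (Emat q n3 s s' u).col = (Emat q n3 s s' u)ᵀ from rfl, hspan, finrank_span_eq_card hvli]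
  simp

end RateAux

/-- Source-to-destination transfer matrix
`G_S = Q^(q-n3) G_A Q^(q-n1) + Q^(q-n4) G_B Q^(q-n2)`. -/
def GSmat (q n1 n2 n3 n4 : ℕ) (GA GB : Matrix (Fin q) (Fin q) (ZMod 2)) :
    Matrix (Fin q) (Fin q) (ZMod 2) :=
  shiftQ q ^ (q - n3) * GA * shiftQ q ^ (q - n1) +
    shiftQ q ^ (q - n4) * GB * shiftQ q ^ (q - n2)

/-- Interference transfer matrix
`G_M = Q^(q-n3) G_A Q^(q-m) + Q^(q-n4) G_B Q^(q-m)`. -/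
def GMmat (q n3 n4 m : ℕ) (GA GB : Matrix (Fin q) (Fin q) (ZMod 2)) :
    Matrix (Fin q) (Fin q) (ZMod 2) :=
  shiftQ q ^ (q - n3) * GA * shiftQ q ^ (q - m) +
    shiftQ q ^ (q - n4) * GB * shiftQ q ^ (q - m)

/-- The achievable rate `rank G_S - dim (range G_S ∩ range G_M)` of a linear scheme. -/
noncomputable def linRate (q : ℕ) (GS GM : Matrix (Fin q) (Fin q) (ZMod 2)) : ℕ :=
  GS.rank - Module.finrank (ZMod 2)
    ↥(LinearMap.range GS.mulVecLin ⊓ LinearMap.range GM.mulVecLin)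

open RateAux in
/-- Case `n1 > n2`, `n3 ≥ n4`, `m ≤ n1`: the upper bound is achievable with `G_M = 0`. -/
theorem rate_achievable_case1
    (n1 n2 n3 n4 m q : ℕ) (hq : q = max n1 (max n2 (max n3 (max n4 m))))
    (h12 : n2 < n1) (h34 : n4 ≤ n3) (hm : m ≤ n1) :
    ∃ GA GB : Matrix (Fin q) (Fin q) (ZMod 2),
      GMmat q n3 n4 m GA GB = 0 ∧
      linRate q (GSmat q n1 n2 n3 n4 GA GB) (GMmat q n3 n4 m GA GB)
        = min (n1 - m + min m n4) n3 := by
  have hq1 : n1 ≤ q := by omega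
  have hq2 : n2 ≤ q := by omega
  have hq3 : n3 ≤ q := by omega
  have hq4 : n4 ≤ q := by omega
  have hqm : m ≤ q := by omega
  set s : ℕ := n1 - m with hs
  set s' : ℕ := min s n3 with hs'
  set t : ℕ := min m n4 with ht
  set u : ℕ := min t (n3 - s') with hu
  set d : ℕ := n1 - n2 with hd
  have hun3 : u ≤ n3 := by omega
  have hun4 : u ≤ n4 := by omega
  have hum : u ≤ m := by omega
  have huq : u ≤ q := by omega
  have hd1 : 1 ≤ d := by omega
  set GA : Matrix (Fin q) (Fin q) (ZMod 2) :=
    Matrix.of (fun i j => Anat q n1 n2 n3 m s' u d ((i : ℕ) + (q - n3)) (j : ℕ)) with hGA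
  set GB : Matrix (Fin q) (Fin q) (ZMod 2) :=
    Matrix.of (fun i j => Bnat q m u d ((i : ℕ) + (q - n4)) (j : ℕ)) with hGB
  have hQA : ∀ i l : Fin q, (shiftQ q ^ (q - n3) * GA) i l
      = Anat q n1 n2 n3 m s' u d (i : ℕ) (l : ℕ) := by
    intro i l
    rw [shiftQ_pow_mul_apply]
    by_cases h : q - n3 ≤ (i : ℕ)
    · rw [dif_pos h]
      show Anat q n1 n2 n3 m s' u d (((i : ℕ) - (q - n3)) + (q - n3)) (l : ℕ) = _
      rw [show ((i : ℕ) - (q - n3)) + (q - n3) = (i : ℕ) by omega]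
    · rw [dif_neg h]
      exact (Anat_row_zero _ hun3 (by omega)).symm
  have hQB : ∀ i l : Fin q, (shiftQ q ^ (q - n4) * GB) i l
      = Bnat q m u d (i : ℕ) (l : ℕ) := by
    intro i l
    rw [shiftQ_pow_mul_apply]
    by_cases h : q - n4 ≤ (i : ℕ)
    · rw [dif_pos h]
      show Bnat q m u d (((i : ℕ) - (q - n4)) + (q - n4)) (l : ℕ) = _
      rw [show ((i : ℕ) - (q - n4)) + (q - n4) = (i : ℕ) by omega]
    · rw [dif_neg h]
      exact (Bnat_row_zero _ hun4 (by omega)).symm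
  have hGM : GMmat q n3 n4 m GA GB = 0 := by
    ext i j
    unfold GMmat
    rw [Matrix.add_apply, Matrix.zero_apply,
      mul_shiftQ_pow_apply, mul_shiftQ_pow_apply]
    by_cases h : (j : ℕ) + (q - m) < q
    · rw [dif_pos h, dif_pos h, hQA, hQB]
      have hj : (j : ℕ) < m := by omega
      show Anat q n1 n2 n3 m s' u d (i : ℕ) ((j : ℕ) + (q - m))
        + Bnat q m u d (i : ℕ) ((j : ℕ) + (q - m)) = 0
      unfold Anat Bnat
      rw [if_neg (by omega), if_pos (by omega)]
      rw [show (j : ℕ) + (q - m) - (q - m) = (j : ℕ) by omega]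
      exact CharTwo.add_self_eq_zero _
    · rw [dif_neg h, dif_neg h, add_zero]
  refine ⟨GA, GB, hGM, ?_⟩
  have hGS : GSmat q n1 n2 n3 n4 GA GB = Emat q n3 s s' u := by
    ext i j
    unfold GSmat
    rw [Matrix.add_apply, mul_shiftQ_pow_apply, mul_shiftQ_pow_apply]
    have hiq : (i : ℕ) < q := i.isLt
    have hE : Emat q n3 s s' u i j =
        (if (j : ℕ) < s' ∧ (i : ℕ) = q - n3 + (j : ℕ) then 1
        else if s ≤ (j : ℕ) ∧ (j : ℕ) < s + u ∧ (i : ℕ) = q - 1 - ((j : ℕ) - s) then 1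
        else 0) := rfl
    by_cases hj1 : (j : ℕ) < n1
    · rw [dif_pos (show (j : ℕ) + (q - n1) < q by omega), hQA]
      by_cases hjs : (j : ℕ) < s
      · -- first block of columns
        have hA : Anat q n1 n2 n3 m s' u d (i : ℕ) ((j : ℕ) + (q - n1))
            = tg q n3 s' (j : ℕ) (i : ℕ)
              + (if n2 ≤ (j : ℕ) + m then cfun q u d ((j : ℕ) + m - n2) (i : ℕ) else 0) := by
          unfold Anat
          rw [if_pos (by omega)]
          rw [show (j : ℕ) + (q - n1) - (q - n1) = (j : ℕ) by omega]
        rw [hA, hE]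
        by_cases hj2 : (j : ℕ) < n2
        · rw [dif_pos (show (j : ℕ) + (q - n2) < q by omega), hQB]
          have hB : Bnat q m u d (i : ℕ) ((j : ℕ) + (q - n2))
              = (if n2 ≤ (j : ℕ) + m then cfun q u d ((j : ℕ) + m - n2) (i : ℕ) else 0) := by
            unfold Bnat
            by_cases hc : n2 ≤ (j : ℕ) + m
            · rw [if_pos (by omega), if_pos hc,
                show (j : ℕ) + (q - n2) - (q - m) = (j : ℕ) + m - n2 by omega]
            · rw [if_neg (by omega), if_neg hc]
          rw [hB, add_assoc, CharTwo.add_self_eq_zero, add_zero]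
          unfold tg
          split_ifs <;> first | rfl | omega
        · rw [dif_neg (show ¬ ((j : ℕ) + (q - n2) < q) by omega), add_zero]
          have hz : (if n2 ≤ (j : ℕ) + m then cfun q u d ((j : ℕ) + m - n2) (i : ℕ) else 0)
              = 0 := by
            split_ifs with hc
            · exact cfun_zero_of_le (by omega)
            · rfl
          rw [hz, add_zero]
          unfold tg
          split_ifs <;> first | rfl | omega
      · -- second block of columns
        have hA : Anat q n1 n2 n3 m s' u d (i : ℕ) ((j : ℕ) + (q - n1))
            = cfun q u d ((j : ℕ) - s) (i : ℕ) := by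
          unfold Anat
          rw [if_neg (by omega), if_pos (by omega),
            show (j : ℕ) + (q - n1) - (q - m) = (j : ℕ) - s by omega]
        rw [hA, hE]
        by_cases hj2 : (j : ℕ) < n2
        · rw [dif_pos (show (j : ℕ) + (q - n2) < q by omega), hQB]
          have hB : Bnat q m u d (i : ℕ) ((j : ℕ) + (q - n2))
              = cfun q u d (((j : ℕ) - s) + d) (i : ℕ) := by
            unfold Bnat
            rw [if_pos (by omega),
              show (j : ℕ) + (q - n2) - (q - m) = ((j : ℕ) - s) + d by omega]
          rw [hB, cfun_key1 hiq huq hd1]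
          split_ifs <;> first | rfl | omega
        · rw [dif_neg (show ¬ ((j : ℕ) + (q - n2) < q) by omega), add_zero]
          rw [cfun_key2 hiq huq (by omega)]
          split_ifs <;> first | rfl | omega
    · rw [dif_neg (show ¬ ((j : ℕ) + (q - n1) < q) by omega),
        dif_neg (show ¬ ((j : ℕ) + (q - n2) < q) by omega), add_zero, hE]
      split_ifs <;> first | rfl | omega
  rw [hGS, hGM]
  unfold linRate
  rw [Matrix.mulVecLin_zero, LinearMap.range_zero, inf_bot_eq, finrank_bot, Nat.sub_zero]
  rw [Emat_rank q n3 s s' u (by omega) hq3 (by omega) (by omega) (by omega)]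
  omega
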